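/- The number of semistandard C2-tableaux of shape (a,b) — semistandard tableaux with entries in {1,2,3,4}, first row of length a+b, second row of length b, such that no column equals [1;4] and the column [2;3] appears at most once — equals (a+1)(b+1)(a+b+2)(a+2b+3)/6, the Weyl dimension of the irreducible sp(4)-module of highest weight aω₁+bω₂. -/

import Mathlib

namespace Stmt9

/-- A two-row semistandard Young tableau with entries in `Fin n` (value `v`
stands for the entry `v + 1`) and shape `(a,b)`: first row of length `a + b`,
second row of length `b`; rows weakly increase, columns strictly increase. -/
def SSYT (n a b : ℕ) (r1 : Fin (a + b) → Fin n) (r2 : Fin b → Fin n) : Prop :=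
  Monotone r1 ∧ Monotone r2 ∧
    ∀ i : Fin b, r1 ⟨i.1, lt_of_lt_of_le i.2 (Nat.le_add_left b a)⟩ < r2 i

/-- The `C₂` condition: no column equals `[1;4]` (0-indexed `(0,3)`) and the
column `[2;3]` (0-indexed `(1,2)`) appears at most once. -/
def CondC2 (a b : ℕ) (r1 : Fin (a + b) → Fin 4) (r2 : Fin b → Fin 4) : Prop :=
  (∀ i : Fin b,
    ¬(r1 ⟨i.1, lt_of_lt_of_le i.2 (Nat.le_add_left b a)⟩ = 0 ∧ r2 i = 3)) ∧
  ∀ i j : Fin b,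
    (r1 ⟨i.1, lt_of_lt_of_le i.2 (Nat.le_add_left b a)⟩ = 1 ∧ r2 i = 2) →
    (r1 ⟨j.1, lt_of_lt_of_le j.2 (Nat.le_add_left b a)⟩ = 1 ∧ r2 j = 2) →
    i = j

open Finset

def cnt {n : ℕ} (f : Fin n → Fin 4) (k : ℕ) : ℕ :=
  (Finset.univ.filter fun i => (f i : ℕ) < k).card

lemma card_filter_val_lt (n m : ℕ) :
    ((Finset.univ : Finset (Fin n)).filter fun j => j.1 < m).card = min m n := by
  rw [Finset.card_filter, Fin.sum_univ_eq_sum_range (fun i => if i < m then 1 else 0)]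
  rw [show (∑ i ∈ range n, if i < m then 1 else 0) = ((range n).filter (fun i => i < m)).card from
    (Finset.card_filter _ _).symm]
  rw [show (range n).filter (fun i => i < m) = range (min m n) by ext i; simp; omega, card_range]

lemma cnt_le {n : ℕ} (f : Fin n → Fin 4) (k : ℕ) : cnt f k ≤ n := by
  refine (Finset.card_filter_le _ _).trans ?_
  simp

lemma cnt_mono {n : ℕ} (f : Fin n → Fin 4) {k l : ℕ} (h : k ≤ l) : cnt f k ≤ cnt f l := by
  refine Finset.card_le_card ?_
  intro i hi
  simp only [Finset.mem_filter, Finset.mem_univ, true_and] at hi ⊢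
  omega

lemma lt_cnt_iff {n : ℕ} {f : Fin n → Fin 4} (hf : Monotone f) (k : ℕ) (i : Fin n) :
    (i : ℕ) < cnt f k ↔ (f i : ℕ) < k := by
  constructor
  · intro h
    by_contra hk
    push_neg at hk
    have hsub : (Finset.univ.filter fun j => (f j : ℕ) < k) ⊆
        Finset.univ.filter (fun j : Fin n => (j : ℕ) < (i : ℕ)) := by
      intro j hj
      simp only [Finset.mem_filter, Finset.mem_univ, true_and] at hj ⊢
      by_contra hji
      push_neg at hji
      have h2 : f i ≤ f j := hf (by exact hji)
      rw [Fin.le_def] at h2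
      omega
    have hc := Finset.card_le_card hsub
    rw [card_filter_val_lt] at hc
    unfold cnt at h
    omega
  · intro h
    have hsub : Finset.univ.filter (fun j : Fin n => (j : ℕ) < (i : ℕ) + 1) ⊆
        (Finset.univ.filter fun j => (f j : ℕ) < k) := by
      intro j hj
      simp only [Finset.mem_filter, Finset.mem_univ, true_and] at hj ⊢
      have h2 : f j ≤ f i := hf (by omega)
      rw [Fin.le_def] at h2
      omega
    have hc := Finset.card_le_card hsub
    rw [card_filter_val_lt] at hc
    unfold cnt
    have := i.2
    omega

lemma eq_of_cnt_eq {n : ℕ} {f g : Fin n → Fin 4} (hf : Monotone f) (hg : Monotone g)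
    (h1 : cnt f 1 = cnt g 1) (h2 : cnt f 2 = cnt g 2) (h3 : cnt f 3 = cnt g 3) : f = g := by
  funext i
  have a1 := lt_cnt_iff hf 1 i
  have a2 := lt_cnt_iff hf 2 i
  have a3 := lt_cnt_iff hf 3 i
  have b1 := lt_cnt_iff hg 1 i
  have b2 := lt_cnt_iff hg 2 i
  have b3 := lt_cnt_iff hg 3 i
  have hfi := (f i).2
  have hgi := (g i).2
  apply Fin.ext
  omega

/-! ### the parameter set -/

def Cond (a b : ℕ) (p : ℕ × ℕ × ℕ × ℕ × ℕ) : Prop :=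
  p.1 ≤ p.2.1 ∧ (p.2.1 ≤ p.2.2.1 ∧ b ≤ p.2.2.1 ∧ p.2.2.1 ≤ a + b) ∧
  p.2.2.2.1 ≤ min p.1 b ∧
  (max p.2.2.2.1 (min p.1 b) ≤ p.2.2.2.2 ∧ p.2.2.2.2 ≤ min (min p.2.1 b) (p.1 + 1))

instance (a b : ℕ) : DecidablePred (Cond a b) := fun p => by unfold Cond; infer_instance

def Sset (a b : ℕ) : Finset (ℕ × ℕ × ℕ × ℕ × ℕ) :=
  (range (a+b+1) ×ˢ range (a+b+1) ×ˢ range (a+b+1) ×ˢ range (b+1) ×ˢ range (b+1)).filter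
    (Cond a b)

lemma mem_Sset {a b : ℕ} {p : ℕ × ℕ × ℕ × ℕ × ℕ} :
    p ∈ Sset a b ↔ (p.1 < a+b+1 ∧ p.2.1 < a+b+1 ∧ p.2.2.1 < a+b+1 ∧ p.2.2.2.1 < b+1 ∧
      p.2.2.2.2 < b+1) ∧ Cond a b p := by
  obtain ⟨x1, x2, x3, y2, y3⟩ := p
  simp [Sset, Finset.mem_filter, Finset.mem_product, and_assoc]

/-! ### forward map -/

lemma forward_mem {a b : ℕ} {r1 : Fin (a+b) → Fin 4} {r2 : Fin b → Fin 4}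
    (h : SSYT 4 a b r1 r2 ∧ CondC2 a b r1 r2) :
    (cnt r1 1, cnt r1 2, cnt r1 3, cnt r2 2, cnt r2 3) ∈ Sset a b := by
  obtain ⟨⟨hm1, hm2, hcol⟩, hc14, hc23⟩ := h
  set x1 := cnt r1 1 with hx1
  set x2 := cnt r1 2 with hx2
  set x3 := cnt r1 3 with hx3
  set y2 := cnt r2 2 with hy2
  set y3 := cnt r2 3 with hy3
  have hba : ∀ m : ℕ, m < b → m < a + b := fun m hm => by omega
  have key1 : ∀ (m : ℕ) (hm : m < a+b), (m < x1 ↔ (r1 ⟨m, hm⟩ : ℕ) < 1) :=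
    fun m hm => lt_cnt_iff hm1 1 ⟨m, hm⟩
  have key2 : ∀ (m : ℕ) (hm : m < a+b), (m < x2 ↔ (r1 ⟨m, hm⟩ : ℕ) < 2) :=
    fun m hm => lt_cnt_iff hm1 2 ⟨m, hm⟩
  have key3 : ∀ (m : ℕ) (hm : m < a+b), (m < x3 ↔ (r1 ⟨m, hm⟩ : ℕ) < 3) :=
    fun m hm => lt_cnt_iff hm1 3 ⟨m, hm⟩
  have key4 : ∀ (m : ℕ) (hm : m < b), (m < y2 ↔ (r2 ⟨m, hm⟩ : ℕ) < 2) :=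
    fun m hm => lt_cnt_iff hm2 2 ⟨m, hm⟩
  have key5 : ∀ (m : ℕ) (hm : m < b), (m < y3 ↔ (r2 ⟨m, hm⟩ : ℕ) < 3) :=
    fun m hm => lt_cnt_iff hm2 3 ⟨m, hm⟩
  have hcolN : ∀ (m : ℕ) (hm : m < b), (r1 ⟨m, hba m hm⟩ : ℕ) < (r2 ⟨m, hm⟩ : ℕ) := by
    intro m hm
    have hc := hcol ⟨m, hm⟩
    rw [Fin.lt_def] at hc
    exact hc
  have hc14N : ∀ (m : ℕ) (hm : m < b),
      ¬((r1 ⟨m, hba m hm⟩ : ℕ) = 0 ∧ (r2 ⟨m, hm⟩ : ℕ) = 3) := by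
    intro m hm hand
    exact hc14 ⟨m, hm⟩ ⟨Fin.ext hand.1, Fin.ext hand.2⟩
  have hc23N : ∀ (m1 m2 : ℕ) (h1 : m1 < b) (h2 : m2 < b),
      (r1 ⟨m1, hba m1 h1⟩ : ℕ) = 1 → (r2 ⟨m1, h1⟩ : ℕ) = 2 →
      (r1 ⟨m2, hba m2 h2⟩ : ℕ) = 1 → (r2 ⟨m2, h2⟩ : ℕ) = 2 → m1 = m2 := by
    intro m1 m2 h1 h2 ha hb' hc hd
    have := hc23 ⟨m1, h1⟩ ⟨m2, h2⟩ ⟨Fin.ext ha, Fin.ext hb'⟩ ⟨Fin.ext hc, Fin.ext hd⟩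
    exact congrArg Fin.val this
  have h12 : x1 ≤ x2 := cnt_mono r1 (by norm_num)
  have h23 : x2 ≤ x3 := cnt_mono r1 (by norm_num)
  have h3n : x3 ≤ a + b := cnt_le r1 3
  have hy23 : y2 ≤ y3 := cnt_mono r2 (by norm_num)
  have hy3b : y3 ≤ b := cnt_le r2 3
  have hbx3 : b ≤ x3 := by
    by_contra hcon
    push_neg at hcon
    have hx3b : x3 < b := hcon
    have h1 : ¬ ((r1 ⟨x3, by omega⟩ : ℕ) < 3) := by
      rw [← key3 x3 (by omega)]
      omega
    have hc := hcolN x3 (by omega)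
    have := (r2 ⟨x3, by omega⟩).2
    omega
  have hy2x1 : y2 ≤ min x1 b := by
    by_contra hcon
    push_neg at hcon
    have hlt : min x1 b < b := by omega
    have h2 := (key4 (min x1 b) hlt).mp (by omega)
    have h1 : ¬ ((r1 ⟨min x1 b, hba _ hlt⟩ : ℕ) < 1) := by
      rw [← key1 (min x1 b) (hba _ hlt)]
      omega
    have hc := hcolN (min x1 b) hlt
    omega
  have hy3x2 : y3 ≤ min x2 b := by
    by_contra hcon
    push_neg at hcon
    have hlt : min x2 b < b := by omega
    have h2 := (key5 (min x2 b) hlt).mp (by omega)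
    have h1 : ¬ ((r1 ⟨min x2 b, hba _ hlt⟩ : ℕ) < 2) := by
      rw [← key2 (min x2 b) (hba _ hlt)]
      omega
    have hc := hcolN (min x2 b) hlt
    omega
  have hminy3 : min x1 b ≤ y3 := by
    by_contra hcon
    push_neg at hcon
    have hlt : y3 < b := by omega
    have h3 : ¬ ((r2 ⟨y3, hlt⟩ : ℕ) < 3) := by
      rw [← key5 y3 hlt]
      omega
    have h1 : (r1 ⟨y3, hba _ hlt⟩ : ℕ) < 1 := by
      rw [← key1 y3 (hba _ hlt)]
      omega
    have := (r2 ⟨y3, hlt⟩).2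
    exact hc14N y3 hlt ⟨by omega, by omega⟩
  have hy3x1 : y3 ≤ x1 + 1 := by
    by_contra hcon
    push_neg at hcon
    have hib : x1 < b := by omega
    have hjb : x1 + 1 < b := by omega
    have hr2i : (r2 ⟨x1, hib⟩ : ℕ) = 2 := by
      have hlo : ¬ (x1 < y2) := by omega
      rw [key4 x1 hib] at hlo
      have hhi : x1 < y3 := by omega
      rw [key5 x1 hib] at hhi
      omega
    have hr2j : (r2 ⟨x1+1, hjb⟩ : ℕ) = 2 := by
      have hlo : ¬ (x1 + 1 < y2) := by omega
      rw [key4 (x1+1) hjb] at hlo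
      have hhi : x1 + 1 < y3 := by omega
      rw [key5 (x1+1) hjb] at hhi
      omega
    have hr1i : (r1 ⟨x1, hba _ hib⟩ : ℕ) = 1 := by
      have hlo : ¬ (x1 < x1) := by omega
      rw [key1 x1 (hba _ hib)] at hlo
      have hc := hcolN x1 hib
      omega
    have hr1j : (r1 ⟨x1+1, hba _ hjb⟩ : ℕ) = 1 := by
      have hlo : ¬ (x1 + 1 < x1) := by omega
      rw [key1 (x1+1) (hba _ hjb)] at hlo
      have hc := hcolN (x1+1) hjb
      omega
    have := hc23N x1 (x1+1) hib hjb hr1i hr2i hr1j hr2j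
    omega
  rw [mem_Sset]
  unfold Cond
  dsimp only
  refine ⟨⟨by omega, by omega, by omega, by omega, by omega⟩,
    h12, ⟨h23, hbx3, h3n⟩, hy2x1, by omega, by omega⟩

/-! ### reconstruction -/

def v3 (x1 x2 x3 i : ℕ) : ℕ := if i < x1 then 0 else if i < x2 then 1 else if i < x3 then 2 else 3
def w2 (y2 y3 i : ℕ) : ℕ := if i < y2 then 1 else if i < y3 then 2 else 3

lemma v3_lt (x1 x2 x3 i : ℕ) : v3 x1 x2 x3 i < 4 := by unfold v3; split_ifs <;> omega
lemma w2_lt (y2 y3 i : ℕ) : w2 y2 y3 i < 4 := by unfold w2; split_ifs <;> omega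

def rec1 (n x1 x2 x3 : ℕ) : Fin n → Fin 4 := fun i => ⟨v3 x1 x2 x3 i.1, v3_lt _ _ _ _⟩
def rec2 (n y2 y3 : ℕ) : Fin n → Fin 4 := fun i => ⟨w2 y2 y3 i.1, w2_lt _ _ _⟩

lemma rec1_mono {n x1 x2 x3 : ℕ} : Monotone (rec1 n x1 x2 x3) := by
  intro i j hij
  rw [Fin.le_def] at hij ⊢
  show v3 x1 x2 x3 i.1 ≤ v3 x1 x2 x3 j.1
  unfold v3; split_ifs <;> omega

lemma rec2_mono {n y2 y3 : ℕ} : Monotone (rec2 n y2 y3) := by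
  intro i j hij
  rw [Fin.le_def] at hij ⊢
  show w2 y2 y3 i.1 ≤ w2 y2 y3 j.1
  unfold w2; split_ifs <;> omega

lemma cnt_rec1 {n x1 x2 x3 : ℕ} (h12 : x1 ≤ x2) (h23 : x2 ≤ x3) (h3n : x3 ≤ n) :
    cnt (rec1 n x1 x2 x3) 1 = x1 ∧ cnt (rec1 n x1 x2 x3) 2 = x2 ∧
      cnt (rec1 n x1 x2 x3) 3 = x3 := by
  refine ⟨?_, ?_, ?_⟩
  · unfold cnt
    have he : (Finset.univ.filter fun i : Fin n => ((rec1 n x1 x2 x3 i : ℕ) < 1)) =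
        Finset.univ.filter (fun j => j.1 < x1) := by
      apply Finset.filter_congr
      intro i _
      simp only [rec1, v3]
      split_ifs <;> omega
    rw [he, card_filter_val_lt]
    omega
  · unfold cnt
    have he : (Finset.univ.filter fun i : Fin n => ((rec1 n x1 x2 x3 i : ℕ) < 2)) =
        Finset.univ.filter (fun j => j.1 < x2) := by
      apply Finset.filter_congr
      intro i _
      simp only [rec1, v3]
      split_ifs <;> omega
    rw [he, card_filter_val_lt]
    omega
  · unfold cnt
    have he : (Finset.univ.filter fun i : Fin n => ((rec1 n x1 x2 x3 i : ℕ) < 3)) =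
        Finset.univ.filter (fun j => j.1 < x3) := by
      apply Finset.filter_congr
      intro i _
      simp only [rec1, v3]
      split_ifs <;> omega
    rw [he, card_filter_val_lt]
    omega

lemma cnt_rec2 {n y2 y3 : ℕ} (h12 : y2 ≤ y3) (h2n : y3 ≤ n) :
    cnt (rec2 n y2 y3) 2 = y2 ∧ cnt (rec2 n y2 y3) 3 = y3 := by
  constructor
  · unfold cnt
    have he : (Finset.univ.filter fun i : Fin n => ((rec2 n y2 y3 i : ℕ) < 2)) =
        Finset.univ.filter (fun j => j.1 < y2) := by
      apply Finset.filter_congr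
      intro i _
      simp only [rec2, w2]
      split_ifs <;> omega
    rw [he, card_filter_val_lt]
    omega
  · unfold cnt
    have he : (Finset.univ.filter fun i : Fin n => ((rec2 n y2 y3 i : ℕ) < 3)) =
        Finset.univ.filter (fun j => j.1 < y3) := by
      apply Finset.filter_congr
      intro i _
      simp only [rec2, w2]
      split_ifs <;> omega
    rw [he, card_filter_val_lt]
    omega

lemma backward_mem {a b : ℕ} {p : ℕ × ℕ × ℕ × ℕ × ℕ} (hp : p ∈ Sset a b) :
    SSYT 4 a b (rec1 (a+b) p.1 p.2.1 p.2.2.1) (rec2 b p.2.2.2.1 p.2.2.2.2) ∧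
      CondC2 a b (rec1 (a+b) p.1 p.2.1 p.2.2.1) (rec2 b p.2.2.2.1 p.2.2.2.2) := by
  obtain ⟨x1, x2, x3, y2, y3⟩ := p
  rw [mem_Sset] at hp
  obtain ⟨-, hC⟩ := hp
  unfold Cond at hC
  dsimp only at hC ⊢
  obtain ⟨h12, ⟨h23, hbx3, h3n⟩, hy2, hy3lo, hy3hi⟩ := hC
  refine ⟨⟨rec1_mono, rec2_mono, ?_⟩, ?_, ?_⟩
  · intro i
    have hib := i.2
    rw [Fin.lt_def]
    show v3 x1 x2 x3 i.1 < w2 y2 y3 i.1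
    unfold v3 w2
    split_ifs <;> omega
  · intro i hand
    have hib := i.2
    have h0 : v3 x1 x2 x3 i.1 = 0 := congrArg Fin.val hand.1
    have h3 : w2 y2 y3 i.1 = 3 := congrArg Fin.val hand.2
    unfold v3 at h0
    unfold w2 at h3
    split_ifs at h0 h3 <;> omega
  · intro i j hi hj
    have hib := i.2
    have hjb := j.2
    have hi1 : v3 x1 x2 x3 i.1 = 1 := congrArg Fin.val hi.1
    have hi2 : w2 y2 y3 i.1 = 2 := congrArg Fin.val hi.2
    have hj1 : v3 x1 x2 x3 j.1 = 1 := congrArg Fin.val hj.1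
    have hj2 : w2 y2 y3 j.1 = 2 := congrArg Fin.val hj.2
    unfold v3 at hi1 hj1
    unfold w2 at hi2 hj2
    apply Fin.ext
    split_ifs at hi1 hi2 hj1 hj2 <;> omega

/-- the reconstruction map, as a map on subtypes -/
def recMap (a b : ℕ) (q : {p // p ∈ Sset a b}) :
    {T : (Fin (a + b) → Fin 4) × (Fin b → Fin 4) //
      SSYT 4 a b T.1 T.2 ∧ CondC2 a b T.1 T.2} :=
  ⟨(rec1 (a+b) q.1.1 q.1.2.1 q.1.2.2.1, rec2 b q.1.2.2.2.1 q.1.2.2.2.2), backward_mem q.2⟩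

lemma cnt_recMap (a b : ℕ) (q : {p // p ∈ Sset a b}) :
    (cnt (recMap a b q).1.1 1, cnt (recMap a b q).1.1 2, cnt (recMap a b q).1.1 3,
      cnt (recMap a b q).1.2 2, cnt (recMap a b q).1.2 3) = q.1 := by
  obtain ⟨⟨x1, x2, x3, y2, y3⟩, hq⟩ := q
  rw [mem_Sset] at hq
  obtain ⟨-, hC⟩ := hq
  unfold Cond at hC
  dsimp only at hC
  obtain ⟨h12, ⟨h23, hbx3, h3n⟩, hy2, hy3lo, hy3hi⟩ := hC
  obtain ⟨e1, e2, e3⟩ := cnt_rec1 (n := a+b) h12 h23 h3n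
  obtain ⟨f1, f2⟩ := cnt_rec2 (n := b) (by omega) (by omega) (y2 := y2) (y3 := y3)
  simp only [recMap, e1, e2, e3, f1, f2]

lemma recMap_bijective (a b : ℕ) : Function.Bijective (recMap a b) := by
  constructor
  · intro q1 q2 h
    have h1 := cnt_recMap a b q1
    have h2 := cnt_recMap a b q2
    rw [h] at h1
    exact Subtype.ext (h1 ▸ h2)
  · intro T
    refine ⟨⟨(cnt T.1.1 1, cnt T.1.1 2, cnt T.1.1 3, cnt T.1.2 2, cnt T.1.2 3),
      forward_mem T.2⟩, ?_⟩
    have hkey := cnt_recMap a b ⟨(cnt T.1.1 1, cnt T.1.1 2, cnt T.1.1 3, cnt T.1.2 2,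
      cnt T.1.2 3), forward_mem T.2⟩
    set q := recMap a b ⟨(cnt T.1.1 1, cnt T.1.1 2, cnt T.1.1 3, cnt T.1.2 2, cnt T.1.2 3),
      forward_mem T.2⟩ with hqdef
    obtain ⟨⟨hqm1, hqm2, hqcol⟩, -⟩ := q.2
    obtain ⟨⟨hTm1, hTm2, hTcol⟩, -⟩ := T.2
    have hzero : ∀ (r1 : Fin (a+b) → Fin 4) (r2 : Fin b → Fin 4),
        (∀ i : Fin b, r1 ⟨i.1, lt_of_lt_of_le i.2 (Nat.le_add_left b a)⟩ < r2 i) →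
        cnt r2 1 = 0 := by
      intro r1 r2 hcol
      unfold cnt
      rw [Finset.card_eq_zero, Finset.filter_eq_empty_iff]
      intro i _
      have hc := hcol i
      rw [Fin.lt_def] at hc
      omega
    simp only [Prod.mk.injEq] at hkey
    apply Subtype.ext
    apply Prod.ext
    · exact eq_of_cnt_eq hqm1 hTm1 hkey.1 hkey.2.1 hkey.2.2.1
    · exact eq_of_cnt_eq hqm2 hTm2
        ((hzero _ _ hqcol).trans (hzero _ _ hTcol).symm) hkey.2.2.2.1 hkey.2.2.2.2

lemma card_eq (a b : ℕ) :
    Nat.card {T : (Fin (a + b) → Fin 4) × (Fin b → Fin 4) //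
        SSYT 4 a b T.1 T.2 ∧ CondC2 a b T.1 T.2} = (Sset a b).card := by
  rw [← Nat.card_eq_finsetCard, Nat.card_congr (Equiv.ofBijective _ (recMap_bijective a b)).symm]

lemma L_G1 (K : ℕ) : 2 * ∑ i ∈ range K, (i+1) = K*(K+1) := by
  induction K with
  | zero => simp
  | succ k ih =>
    rw [Finset.sum_range_succ, Nat.mul_add, ih]
    ring

lemma L_G2 (K : ℕ) : 6 * ∑ i ∈ range K, i*(K-i) = K*(K+1)*(K-1) := by
  induction K with
  | zero => simp
  | succ k ih =>
    have e1 : ∀ i ∈ range (k+1), i*(k+1-i) = i*(k-i) + i := by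
      intro i hi
      simp only [mem_range] at hi
      have e : k+1-i = (k-i)+1 := by omega
      rw [e, Nat.mul_add, Nat.mul_one]
    rw [Finset.sum_congr rfl e1, Finset.sum_add_distrib, Finset.sum_range_succ (fun i => i*(k-i)),
      Nat.sub_self, Nat.mul_zero, Nat.add_zero, Nat.mul_add, ih]
    have e2 : ∑ i ∈ range (k+1), i = ∑ i ∈ range k, (i+1) := by
      rw [Finset.sum_range_succ' (fun i => i)]
      simp
    rw [e2]
    have e4 : 6 * ∑ i ∈ range k, (i+1) = 3 * (k * (k+1)) := by
      have e3 := L_G1 k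
      omega
    rw [e4]
    cases k with
    | zero => simp
    | succ k' =>
      simp only [Nat.succ_sub_one]
      ring

lemma L_G3 (K : ℕ) : 3 * ∑ i ∈ range K, (i+1)*(i+2) = K*(K+1)*(K+2) := by
  induction K with
  | zero => simp
  | succ k ih =>
    rw [Finset.sum_range_succ, Nat.mul_add, ih]
    ring

lemma L_rev (K : ℕ) : ∑ i ∈ range K, (K - i) = ∑ i ∈ range K, (i+1) := by
  rw [← Finset.sum_range_reflect]
  refine Finset.sum_congr rfl fun j hj => ?_
  simp only [mem_range] at hj
  omega

lemma L_V {u v : ℕ} (h : u ≤ v) :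
    2 * ∑ x ∈ Finset.Ico u v, (v - x) = (v-u)*(v-u+1) := by
  rw [Finset.sum_Ico_eq_sum_range]
  have e1 : ∀ i ∈ range (v - u), v - (u + i) = (v - u) - i := by
    intro i hi; omega
  rw [Finset.sum_congr rfl e1, L_rev, L_G1]


lemma card_Sset (a b : ℕ) :
    (Sset a b).card = ∑ x1 ∈ range (a+b+1), ∑ x2 ∈ range (a+b+1),
      if x1 ≤ x2 then
        ((min x1 b + 1) * (min (min x2 b) (x1+1) + 1 - min x1 b)) * ((a+b+1) - max x2 b)
      else 0 := by
  unfold Sset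
  rw [Finset.card_filter]
  simp only [Finset.sum_product]
  refine Finset.sum_congr rfl fun x1 hx1 => ?_
  refine Finset.sum_congr rfl fun x2 hx2 => ?_
  simp only [mem_range] at hx1 hx2
  by_cases h12 : x1 ≤ x2
  · rw [if_pos h12]
    set c1 := min x1 b with hc1
    set H := min (min x2 b) (x1+1) with hH
    have hHb : H ≤ b := by omega
    have hc1b : c1 ≤ b := by omega
    -- evaluate per x3
    have step1 : ∀ x3 ∈ range (a+b+1),
        (∑ y2 ∈ range (b+1), ∑ y3 ∈ range (b+1),
          if Cond a b (x1, x2, x3, y2, y3) then 1 else 0) =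
        if x2 ≤ x3 ∧ b ≤ x3 ∧ x3 ≤ a + b then (c1 + 1) * (H + 1 - c1) else 0 := by
      intro x3 _
      by_cases hA3 : x2 ≤ x3 ∧ b ≤ x3 ∧ x3 ≤ a + b
      · rw [if_pos hA3]
        have step2 : ∀ y2 ∈ range (b+1),
            (∑ y3 ∈ range (b+1), if Cond a b (x1, x2, x3, y2, y3) then 1 else 0) =
            if y2 ≤ c1 then H + 1 - c1 else 0 := by
          intro y2 hy2
          simp only [mem_range] at hy2
          by_cases hA4 : y2 ≤ c1
          · rw [if_pos hA4]
            have e : ∀ y3 ∈ range (b+1), (if Cond a b (x1, x2, x3, y2, y3) then 1 else 0) =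
                if c1 ≤ y3 ∧ y3 ≤ H then 1 else 0 := by
              intro y3 _
              unfold Cond
              dsimp only
              by_cases hy3 : c1 ≤ y3 ∧ y3 ≤ H
              · rw [if_pos hy3]; apply if_pos
                exact ⟨h12, hA3, by omega, by omega, by omega⟩
              · rw [if_neg hy3]; apply if_neg
                intro ⟨_, _, _, hmax, hhi⟩
                omega
            rw [Finset.sum_congr rfl e, ← Finset.card_filter]
            rw [show (range (b+1)).filter (fun y3 => c1 ≤ y3 ∧ y3 ≤ H) = Finset.Ico c1 (H+1) by
              ext y3; simp; omega]
            rw [Nat.card_Ico]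
          · rw [if_neg hA4]
            refine Finset.sum_eq_zero fun y3 _ => ?_
            rw [if_neg]
            unfold Cond
            dsimp only
            intro ⟨_, _, hy2c, _⟩
            omega
        rw [Finset.sum_congr rfl step2, ← Finset.sum_filter]
        rw [show (range (b+1)).filter (fun y2 => y2 ≤ c1) = range (c1+1) by
          ext y2; simp; omega]
        rw [Finset.sum_const, card_range, smul_eq_mul]
      · rw [if_neg hA3]
        refine Finset.sum_eq_zero fun y2 _ => Finset.sum_eq_zero fun y3 _ => ?_
        rw [if_neg]
        unfold Cond
        dsimp only
        intro ⟨_, hx3, _⟩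
        exact hA3 hx3
    rw [Finset.sum_congr rfl step1, ← Finset.sum_filter]
    rw [show (range (a+b+1)).filter (fun x3 => x2 ≤ x3 ∧ b ≤ x3 ∧ x3 ≤ a+b) =
      Finset.Ico (max x2 b) (a+b+1) by ext x3; simp; omega]
    rw [Finset.sum_const, Nat.card_Ico, smul_eq_mul, Nat.mul_comm]
  · rw [if_neg h12]
    refine Finset.sum_eq_zero fun x3 _ => Finset.sum_eq_zero fun y2 _ =>
      Finset.sum_eq_zero fun y3 _ => ?_
    rw [if_neg]
    unfold Cond
    dsimp only
    intro ⟨hx12, _⟩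
    exact h12 hx12

lemma L_U (a b u : ℕ) (hub : u ≤ b) :
    2 * ∑ x2 ∈ Finset.Ico u (a+b+1), (a+b+1 - max x2 b) =
      2*((b-u)*(a+1)) + (a+1)*(a+2) := by
  rw [← Finset.sum_Ico_consecutive _ (show u ≤ b by omega) (show b ≤ a+b+1 by omega)]
  have e1 : ∀ x2 ∈ Finset.Ico u b, a+b+1 - max x2 b = a+1 := by
    intro x2 hx2
    simp only [Finset.mem_Ico] at hx2
    omega
  rw [Finset.sum_congr rfl e1, Finset.sum_const, Nat.card_Ico, smul_eq_mul]
  have e2 : ∀ x2 ∈ Finset.Ico b (a+b+1), a+b+1 - max x2 b = a+b+1 - x2 := by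
    intro x2 hx2
    simp only [Finset.mem_Ico] at hx2
    omega
  rw [Finset.sum_congr rfl e2]
  have hv := L_V (show b ≤ a+b+1 by omega)
  have e3 : a+b+1-b = a+1 := by omega
  rw [e3] at hv
  have e4 : (a+1)*(a+1+1) = (a+1)*(a+2) := by ring
  rw [e4] at hv
  rw [Nat.mul_add]
  congr 1

theorem card_Sset_formula (a b : ℕ) : (Sset a b).card * 6 =
    (a + 1) * (b + 1) * (a + b + 2) * (a + 2 * b + 3) := by
  rw [card_Sset]
  rw [show (∑ x1 ∈ range (a+b+1), ∑ x2 ∈ range (a+b+1),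
      if x1 ≤ x2 then
        ((min x1 b + 1) * (min (min x2 b) (x1+1) + 1 - min x1 b)) * ((a+b+1) - max x2 b)
      else 0) =
    (∑ x1 ∈ range b, ∑ x2 ∈ range (a+b+1),
      if x1 ≤ x2 then
        ((min x1 b + 1) * (min (min x2 b) (x1+1) + 1 - min x1 b)) * ((a+b+1) - max x2 b)
      else 0) +
    ∑ x1 ∈ Finset.Ico b (a+b+1), ∑ x2 ∈ range (a+b+1),
      if x1 ≤ x2 then
        ((min x1 b + 1) * (min (min x2 b) (x1+1) + 1 - min x1 b)) * ((a+b+1) - max x2 b)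
      else 0 by
    rw [← Finset.sum_filter_add_sum_filter_not (range (a+b+1)) (fun x1 => x1 < b),
      show (range (a+b+1)).filter (fun x1 => x1 < b) = range b by ext; simp; omega,
      show (range (a+b+1)).filter (fun x1 => ¬ x1 < b) = Finset.Ico b (a+b+1) by
        ext; simp; omega]]
  -- B part : x1 ∈ Ico b (a+b+1)
  have hB : ∀ x1 ∈ Finset.Ico b (a+b+1),
      (∑ x2 ∈ range (a+b+1), if x1 ≤ x2 then
        ((min x1 b + 1) * (min (min x2 b) (x1+1) + 1 - min x1 b)) * ((a+b+1) - max x2 b)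
      else 0) = (b+1) * ∑ x2 ∈ Finset.Ico x1 (a+b+1), (a+b+1 - x2) := by
    intro x1 hx1
    simp only [Finset.mem_Ico] at hx1
    have e : ∀ x2 ∈ range (a+b+1), (if x1 ≤ x2 then
        ((min x1 b + 1) * (min (min x2 b) (x1+1) + 1 - min x1 b)) * ((a+b+1) - max x2 b)
      else 0) = if x1 ≤ x2 then (b+1) * (a+b+1 - x2) else 0 := by
      intro x2 hx2
      simp only [mem_range] at hx2
      by_cases h : x1 ≤ x2
      · rw [if_pos h, if_pos h]
        have e1 : min x1 b = b := by omega
        have e2 : min (min x2 b) (x1+1) = b := by omega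
        have e3 : max x2 b = x2 := by omega
        rw [e1, e2, e3]
        have e4 : b + 1 - b = 1 := by omega
        rw [e4, Nat.mul_one]
      · rw [if_neg h, if_neg h]
    rw [Finset.sum_congr rfl e, ← Finset.sum_filter]
    rw [show (range (a+b+1)).filter (fun x2 => x1 ≤ x2) = Finset.Ico x1 (a+b+1) by
      ext x2; simp; omega]
    rw [← Finset.mul_sum]
  rw [Finset.sum_congr rfl hB, ← Finset.mul_sum]
  -- evaluate the B sum
  set WBs := ∑ x1 ∈ Finset.Ico b (a+b+1), (∑ x2 ∈ Finset.Ico x1 (a+b+1), (a+b+1 - x2))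
    with hWBs
  have hWB : 2 * WBs = ∑ i ∈ range (a+1), (i+1)*(i+2) := by
    rw [hWBs, Finset.mul_sum]
    have e : ∀ x1 ∈ Finset.Ico b (a+b+1),
        2 * (∑ x2 ∈ Finset.Ico x1 (a+b+1), (a+b+1 - x2)) =
        (a+b+1-x1) * (a+b+1-x1+1) := by
      intro x1 hx1
      simp only [Finset.mem_Ico] at hx1
      exact L_V (by omega)
    rw [Finset.sum_congr rfl e, Finset.sum_Ico_eq_sum_range]
    have e5 : a+b+1-b = a+1 := by omega
    rw [e5, ← Finset.sum_range_reflect]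
    refine Finset.sum_congr rfl fun j hj => ?_
    simp only [mem_range] at hj
    have e6 : a+b+1 - (b + (a+1-1-j)) = j+1 := by omega
    rw [e6]
  -- A part : x1 ∈ Ico 0 b
  have hA : ∀ x1 ∈ range b,
      (∑ x2 ∈ range (a+b+1), if x1 ≤ x2 then
        ((min x1 b + 1) * (min (min x2 b) (x1+1) + 1 - min x1 b)) * ((a+b+1) - max x2 b)
      else 0) =
      2*(a+1)*((x1+1)*(b-(x1+1))) + ((a+1)*(a+2))*(x1+1) + (a+1)*(x1+1) := by
    intro x1 hx1
    simp only [mem_range] at hx1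
    have hx1b : x1 < b := hx1
    have e : ∀ x2 ∈ range (a+b+1), (if x1 ≤ x2 then
        ((min x1 b + 1) * (min (min x2 b) (x1+1) + 1 - min x1 b)) * ((a+b+1) - max x2 b)
      else 0) =
        (if x1+1 ≤ x2 then (2*(x1+1)) * (a+b+1 - max x2 b) else 0) +
        (if x2 = x1 then (x1+1) * (a+b+1 - max x2 b) else 0) := by
      intro x2 hx2
      simp only [mem_range] at hx2
      rcases lt_trichotomy x2 x1 with hlt | heq | hgt
      · rw [if_neg (by omega), if_neg (by omega), if_neg (by omega)]
      · rw [if_pos (by omega), if_neg (by omega), if_pos heq, heq]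
        have e1 : min x1 b = x1 := by omega
        have e2 : min x1 (x1+1) = x1 := by omega
        rw [e1, e2]
        have e3 : x1 + 1 - x1 = 1 := by omega
        rw [e3, Nat.mul_one, Nat.zero_add]
      · rw [if_pos (by omega), if_pos (by omega), if_neg (by omega)]
        have e1 : min x1 b = x1 := by omega
        have e2 : min (min x2 b) (x1+1) = x1+1 := by omega
        rw [e1, e2]
        have e3 : x1 + 1 + 1 - x1 = 2 := by omega
        rw [e3, Nat.add_zero]
        ring
    rw [Finset.sum_congr rfl e, Finset.sum_add_distrib]
    have eS1 : (∑ x2 ∈ range (a+b+1), if x1+1 ≤ x2 then (2*(x1+1)) * (a+b+1 - max x2 b) else 0)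
        = (2*(x1+1)) * ∑ x2 ∈ Finset.Ico (x1+1) (a+b+1), (a+b+1 - max x2 b) := by
      rw [← Finset.sum_filter]
      rw [show (range (a+b+1)).filter (fun x2 => x1+1 ≤ x2) = Finset.Ico (x1+1) (a+b+1) by
        ext x2; simp; omega]
      rw [← Finset.mul_sum]
    have eS2 : (∑ x2 ∈ range (a+b+1), if x2 = x1 then (x1+1) * (a+b+1 - max x2 b) else 0)
        = (a+1)*(x1+1) := by
      rw [Finset.sum_ite_eq' (range (a+b+1)) x1 (fun x2 => (x1+1) * (a+b+1 - max x2 b))]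
      rw [if_pos (by simp; omega)]
      have e1 : a+b+1 - max x1 b = a+1 := by omega
      rw [e1]
      ring
    rw [eS1, eS2]
    have hU := L_U a b (x1+1) (by omega)
    have e7 : (2*(x1+1)) * (∑ x2 ∈ Finset.Ico (x1+1) (a+b+1), (a+b+1 - max x2 b)) =
        (x1+1) * (2 * ∑ x2 ∈ Finset.Ico (x1+1) (a+b+1), (a+b+1 - max x2 b)) := by ring
    rw [e7, hU]
    ring
  rw [Finset.sum_congr rfl hA]
  rw [Finset.sum_add_distrib, Finset.sum_add_distrib, ← Finset.mul_sum, ← Finset.mul_sum,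
    ← Finset.mul_sum]
  set D := ∑ x1 ∈ range b, (x1+1)*(b-(x1+1)) with hDdef
  set SB := ∑ x1 ∈ range b, (x1+1) with hSBdef
  set SB2 := ∑ i ∈ range (a+1), (i+1)*(i+2) with hSB2def
  have hD : 6 * D = b*(b+1)*(b-1) := by
    rw [hDdef, ← Finset.sum_range_reflect]
    have e : ∀ j ∈ range b, (b-1-j+1)*(b-(b-1-j+1)) = j*(b-j) := by
      intro j hj
      simp only [mem_range] at hj
      have e1 : b-1-j+1 = b-j := by omega
      have e2 : b-(b-j) = j := by omega
      rw [e1, e2, Nat.mul_comm]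
    rw [Finset.sum_congr rfl e, L_G2]
  have hSB : 2 * SB = b*(b+1) := by rw [hSBdef, L_G1]
  have hSB2 : 3 * SB2 = (a+1)*((a+1)+1)*((a+1)+2) := by rw [hSB2def, L_G3]
  calc (2*(a+1)*D + (a+1)*(a+2)*SB + (a+1)*SB + (b+1)*WBs) * 6
      = 2*(a+1)*(6*D) + 3*((a+1)*(a+2))*(2*SB) + 3*(a+1)*(2*SB) + (b+1)*(3*(2*WBs)) := by
        ring
    _ = 2*(a+1)*(b*(b+1)*(b-1)) + 3*((a+1)*(a+2))*(b*(b+1)) + 3*(a+1)*(b*(b+1)) +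
        (b+1)*(3*SB2) := by rw [hD, hSB, hWB]
    _ = 2*(a+1)*(b*(b+1)*(b-1)) + 3*((a+1)*(a+2))*(b*(b+1)) + 3*(a+1)*(b*(b+1)) +
        (b+1)*((a+1)*((a+1)+1)*((a+1)+2)) := by rw [hSB2]
    _ = (a + 1) * (b + 1) * (a + b + 2) * (a + 2 * b + 3) := by
        cases b with
        | zero => ring_nf
        | succ b' =>
          simp only [Nat.succ_sub_one]
          ring


/-- The number of semistandard `C₂`-tableaux of shape `(a,b)` equals the Weyl
dimension `(a+1)(b+1)(a+b+2)(a+2b+3)/6` of the irreducible `sp(4)`-module of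
highest weight `aω₁ + bω₂`. -/
theorem card_ssyt_C2 (a b : ℕ) :
    Nat.card {T : (Fin (a + b) → Fin 4) × (Fin b → Fin 4) //
        SSYT 4 a b T.1 T.2 ∧ CondC2 a b T.1 T.2} * 6 =
      (a + 1) * (b + 1) * (a + b + 2) * (a + 2 * b + 3) := by
  rw [card_eq a b]
  exact card_Sset_formula a b

end Stmt9
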